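/- Let Q ⊂ ℝ^d be a cube of side length r > 0 and for a function f on Q let f_Q denote its value at the center of Q. For all Lipschitz maps f, g : Q → ℝ and π, κ : Q → ℝ^d, one has |∫_Q f det Dπ − ∫_Q g det Dκ| ≤ r^{d+1} (Lip(f)+Lip(g)) (√d/2) L^d + r^d |f_Q − g_Q| L^d + r^{d−1} |f_Q| c_d L^{d−1} sup_{∂Q} ‖π − κ‖, where L is the maximum of the Lipschitz constants of all coordinates of π and κ, and c_d is the constant from the boundary estimate for integrals of Jacobians. -/

import Mathlib

open MeasureTheory
open scoped NNReal BigOperators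

section Aux

lemma hadamard_det {d : ℕ} (A : EuclideanSpace ℝ (Fin d) →L[ℝ] EuclideanSpace ℝ (Fin d))
    (L : ℝ) (hL : 0 ≤ L) (h : ∀ j v, |A v j| ≤ L * ‖v‖) : |A.det| ≤ L ^ d := by
  classical
  haveI : Fact (Module.finrank ℝ (EuclideanSpace ℝ (Fin d)) = d) := ⟨finrank_euclideanSpace_fin⟩
  set b := EuclideanSpace.basisFun (Fin d) ℝ with hb
  set w : Fin d → EuclideanSpace ℝ (Fin d) :=
    fun j => (WithLp.equiv 2 (Fin d → ℝ)).symm (fun i => A (b i) j) with hw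
  have hwji : ∀ j i, w j i = A (b i) j := fun j i => rfl
  have key : ∀ (j : Fin d) (v : EuclideanSpace ℝ (Fin d)), A v j = ∑ i, v i * w j i := by
    intro j v
    have hv : v = ∑ i, v i • b.toBasis i := by
      have hsr := b.toBasis.sum_repr v
      refine Eq.symm (hsr.symm.trans ?_).symm
      refine Finset.sum_congr rfl fun i _ => ?_
      rw [OrthonormalBasis.coe_toBasis_repr_apply, hb, EuclideanSpace.basisFun_repr]
    have h1 : A v = ∑ i, v i • A (b.toBasis i) := by
      conv_lhs => rw [hv]
      rw [map_sum]
      exact Finset.sum_congr rfl fun i _ => A.map_smul _ _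
    have h2 := map_sum (EuclideanSpace.proj j (𝕜 := ℝ)) (fun i => v i • A (b.toBasis i)) Finset.univ
    have h3 : A v j = ∑ i, v i * (A (b.toBasis i) j) := by
      rw [h1]
      refine h2.trans (Finset.sum_congr rfl fun i _ => ?_)
      simp [smul_eq_mul]
    rw [h3]
    refine Finset.sum_congr rfl fun i _ => ?_
    rw [hwji]
    congr 1
  have hwnorm : ∀ j, ‖w j‖ ≤ L := by
    intro j
    have h2 : ‖w j‖ ^ 2 = ∑ i, (w j i) ^ 2 := by
      rw [EuclideanSpace.norm_eq, Real.sq_sqrt (by positivity)]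
      refine Finset.sum_congr rfl fun i _ => ?_
      rw [Real.norm_eq_abs, sq_abs]
    have h3 : A (w j) j = ‖w j‖ ^ 2 := by
      rw [key j (w j), h2]
      exact Finset.sum_congr rfl fun i _ => (sq (w j i)) ▸ rfl
    have h4 : ‖w j‖ ^ 2 ≤ L * ‖w j‖ := by
      rw [← h3]
      exact (le_abs_self _).trans (h j (w j))
    rcases eq_or_lt_of_le (norm_nonneg (w j)) with h0 | h0
    · rw [← h0]; exact hL
    · nlinarith
  have hdet : A.det = (b.toBasis.toMatrix w).det := by
    have hM : Matrix.transpose (LinearMap.toMatrix b.toBasis b.toBasis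
        (A : EuclideanSpace ℝ (Fin d) →ₗ[ℝ] EuclideanSpace ℝ (Fin d)))
        = b.toBasis.toMatrix w := by
      ext i j
      rw [Matrix.transpose_apply, LinearMap.toMatrix_apply, Module.Basis.toMatrix_apply,
        OrthonormalBasis.coe_toBasis_repr_apply, OrthonormalBasis.coe_toBasis_repr_apply,
        hb, EuclideanSpace.basisFun_repr, EuclideanSpace.basisFun_repr, hwji,
        OrthonormalBasis.coe_toBasis]
      rfl
    rw [ContinuousLinearMap.det, ← LinearMap.det_toMatrix b.toBasis, ← Matrix.det_transpose, hM]
  have hfd : b.toBasis.det w = (b.toBasis.toMatrix w).det := Module.Basis.det_apply _ _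
  set o := b.toBasis.orientation with ho
  calc |A.det| = |b.toBasis.det w| := by rw [hdet, hfd]
    _ = |o.volumeForm w| := (o.volumeForm_robust' b w).symm
    _ ≤ ∏ j, ‖w j‖ := o.abs_volumeForm_apply_le w
    _ ≤ ∏ _j : Fin d, L := Finset.prod_le_prod (fun j _ => norm_nonneg _) (fun j _ => hwnorm j)
    _ = L ^ d := by simp

lemma abs_det_fderiv_le {d : ℕ} (π : EuclideanSpace ℝ (Fin d) → EuclideanSpace ℝ (Fin d))
    (L : ℝ≥0) (hπ : ∀ j, LipschitzWith L fun x => π x j) (x : EuclideanSpace ℝ (Fin d)) :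
    |(fderiv ℝ π x).det| ≤ (L : ℝ) ^ d := by
  by_cases hx : DifferentiableAt ℝ π x
  · refine hadamard_det _ _ L.coe_nonneg fun j v => ?_
    have hj : HasFDerivAt (fun y => π y j)
        ((EuclideanSpace.proj j (𝕜 := ℝ)).comp (fderiv ℝ π x)) x :=
      (EuclideanSpace.proj j (𝕜 := ℝ)).hasFDerivAt.comp x hx.hasFDerivAt
    have hn : ‖(EuclideanSpace.proj j (𝕜 := ℝ)).comp (fderiv ℝ π x)‖ ≤ L :=
      hj.le_of_lipschitz (hπ j)
    calc |fderiv ℝ π x v j|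
        = ‖((EuclideanSpace.proj j (𝕜 := ℝ)).comp (fderiv ℝ π x)) v‖ := by
          rw [Real.norm_eq_abs]; rfl
      _ ≤ ‖(EuclideanSpace.proj j (𝕜 := ℝ)).comp (fderiv ℝ π x)‖ * ‖v‖ :=
          ContinuousLinearMap.le_opNorm _ _
      _ ≤ L * ‖v‖ := mul_le_mul_of_nonneg_right hn (norm_nonneg v)
  · rw [fderiv_zero_of_not_differentiableAt hx]
    refine hadamard_det _ _ L.coe_nonneg fun j v => ?_
    have : ((0 : EuclideanSpace ℝ (Fin d) →L[ℝ] EuclideanSpace ℝ (Fin d)) v) j = 0 := rfl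
    rw [this, abs_zero]
    positivity

lemma cube_eq_preimage {d : ℕ} (p : EuclideanSpace ℝ (Fin d)) (r : ℝ) :
    {x : EuclideanSpace ℝ (Fin d) | ∀ i, p i ≤ x i ∧ x i ≤ p i + r}
      = (MeasurableEquiv.toLp 2 (Fin d → ℝ)).symm ⁻¹'
        (Set.univ.pi fun i => Set.Icc (p i) (p i + r)) := by
  ext x
  simp only [Set.mem_setOf_eq, Set.mem_preimage, Set.mem_pi, Set.mem_univ, forall_true_left,
    Set.mem_Icc]
  rfl

lemma cube_measurable {d : ℕ} (p : EuclideanSpace ℝ (Fin d)) (r : ℝ) :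
    MeasurableSet {x : EuclideanSpace ℝ (Fin d) | ∀ i, p i ≤ x i ∧ x i ≤ p i + r} := by
  rw [cube_eq_preimage]
  exact (MeasurableEquiv.toLp 2 (Fin d → ℝ)).symm.measurable
    (MeasurableSet.univ_pi fun i => measurableSet_Icc)

lemma cube_volume {d : ℕ} (p : EuclideanSpace ℝ (Fin d)) (r : ℝ) :
    volume {x : EuclideanSpace ℝ (Fin d) | ∀ i, p i ≤ x i ∧ x i ≤ p i + r}
      = ENNReal.ofReal r ^ d := by
  rw [cube_eq_preimage]
  rw [(EuclideanSpace.volume_preserving_symm_measurableEquiv_toLp (Fin d)).measure_preimage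
    ((MeasurableSet.univ_pi fun i => measurableSet_Icc).nullMeasurableSet)]
  rw [volume_pi_pi]
  simp [Real.volume_Icc]

end Aux

/-- Let `Q ⊆ ℝ^d` be a cube of side length `r > 0` with centre `cQ`
and write `f_Q = f cQ`.  Assume `c_d` is a constant for which the boundary estimate
for integrals of Jacobians holds on `Q`.  Then for Lipschitz `f, g : Q → ℝ` and
`π, κ : Q → ℝ^d`,
`|∫_Q f det Dπ − ∫_Q g det Dκ| ≤ r^{d+1}(Lip f + Lip g)(√d/2)L^d + r^d |f_Q − g_Q| L^d
  + r^{d−1} |f_Q| c_d L^{d−1} sup_{∂Q} ‖π − κ‖`. -/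
theorem statement3 (d : ℕ) (p : EuclideanSpace ℝ (Fin d)) (r : ℝ) (hr : 0 < r)
    (Q : Set (EuclideanSpace ℝ (Fin d)))
    (hQ : Q = {x : EuclideanSpace ℝ (Fin d) | ∀ i, p i ≤ x i ∧ x i ≤ p i + r})
    (cQ : EuclideanSpace ℝ (Fin d)) (hcQ : ∀ i, cQ i = p i + r / 2)
    (cd : ℝ)
    (hcd : ∀ (π κ : EuclideanSpace ℝ (Fin d) → EuclideanSpace ℝ (Fin d)) (L' : ℝ≥0),
      (∀ j, LipschitzWith L' fun x => π x j) →
      (∀ j, LipschitzWith L' fun x => κ x j) →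
      |(∫ x in Q, (fderiv ℝ π x).det) - ∫ x in Q, (fderiv ℝ κ x).det|
        ≤ cd * (L' : ℝ) ^ (d - 1) * r ^ (d - 1) *
          sSup ((fun x => ‖π x - κ x‖) '' frontier Q))
    (f g : EuclideanSpace ℝ (Fin d) → ℝ) (Kf Kg : ℝ≥0)
    (hf : LipschitzWith Kf f) (hg : LipschitzWith Kg g)
    (π κ : EuclideanSpace ℝ (Fin d) → EuclideanSpace ℝ (Fin d)) (L : ℝ≥0)
    (hπ : ∀ j, LipschitzWith L fun x => π x j)
    (hκ : ∀ j, LipschitzWith L fun x => κ x j) :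
    |(∫ x in Q, f x * (fderiv ℝ π x).det) - ∫ x in Q, g x * (fderiv ℝ κ x).det|
      ≤ r ^ (d + 1) * ((Kf : ℝ) + (Kg : ℝ)) * (Real.sqrt d / 2) * (L : ℝ) ^ d
        + r ^ d * |f cQ - g cQ| * (L : ℝ) ^ d
        + r ^ (d - 1) * |f cQ| * cd * (L : ℝ) ^ (d - 1) *
          sSup ((fun x => ‖π x - κ x‖) '' frontier Q) := by
  classical
  set S := sSup ((fun x => ‖π x - κ x‖) '' frontier Q) with hSdef
  have hQm : MeasurableSet Q := hQ ▸ cube_measurable p r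
  have hQv : volume Q = ENNReal.ofReal r ^ d := hQ ▸ cube_volume p r
  have hQfin : volume Q < ⊤ := by
    rw [hQv]; exact ENNReal.pow_lt_top ENNReal.ofReal_lt_top
  have hQtoReal : (volume Q).toReal = r ^ d := by
    rw [hQv, ENNReal.toReal_pow, ENNReal.toReal_ofReal hr.le]
  -- distance to the centre
  have hdist : ∀ x ∈ Q, ‖x - cQ‖ ≤ Real.sqrt d * (r / 2) := by
    intro x hx
    rw [hQ] at hx
    have hxi : ∀ i, |x i - cQ i| ≤ r / 2 := by
      intro i
      have h1 := (hx i).1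
      have h2 := (hx i).2
      rw [hcQ i, abs_le]
      constructor <;> linarith
    have hsub : ∀ i, ‖(x - cQ) i‖ ^ 2 ≤ (r / 2) ^ 2 := by
      intro i
      have : (x - cQ) i = x i - cQ i := rfl
      rw [this, Real.norm_eq_abs]
      have := hxi i
      nlinarith [abs_nonneg (x i - cQ i)]
    rw [EuclideanSpace.norm_eq]
    calc Real.sqrt (∑ i, ‖(x - cQ) i‖ ^ 2)
        ≤ Real.sqrt (∑ _i : Fin d, (r / 2) ^ 2) :=
          Real.sqrt_le_sqrt (Finset.sum_le_sum fun i _ => hsub i)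
      _ = Real.sqrt ((d : ℝ) * (r / 2) ^ 2) := by
          rw [Finset.sum_const, Finset.card_univ, Fintype.card_fin, nsmul_eq_mul]
      _ = Real.sqrt d * (r / 2) := by
          rw [Real.sqrt_mul (Nat.cast_nonneg d), Real.sqrt_sq (by linarith)]
  -- pointwise Jacobian bounds
  have hJπ := abs_det_fderiv_le π L hπ
  have hJκ := abs_det_fderiv_le κ L hκ
  -- measurability
  have measJπ : Measurable fun x => (fderiv ℝ π x).det :=
    ContinuousLinearMap.continuous_det.measurable.comp (measurable_fderiv ℝ π)
  have measJκ : Measurable fun x => (fderiv ℝ κ x).det :=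
    ContinuousLinearMap.continuous_det.measurable.comp (measurable_fderiv ℝ κ)
  -- integrability
  have intJπ : IntegrableOn (fun x => (fderiv ℝ π x).det) Q volume :=
    Measure.integrableOn_of_bounded hQfin.ne measJπ.aestronglyMeasurable
      (ae_of_all _ fun x => by rw [Real.norm_eq_abs]; exact hJπ x)
  have intJκ : IntegrableOn (fun x => (fderiv ℝ κ x).det) Q volume :=
    Measure.integrableOn_of_bounded hQfin.ne measJκ.aestronglyMeasurable
      (ae_of_all _ fun x => by rw [Real.norm_eq_abs]; exact hJκ x)
  have bddf : ∀ x ∈ Q, |f x| ≤ |f cQ| + (Kf : ℝ) * (Real.sqrt d * (r / 2)) := by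
    intro x hx
    have h1 : |f x - f cQ| ≤ (Kf : ℝ) * ‖x - cQ‖ := by
      have := hf.dist_le_mul x cQ
      rwa [Real.dist_eq, dist_eq_norm] at this
    have h2 : (Kf : ℝ) * ‖x - cQ‖ ≤ (Kf : ℝ) * (Real.sqrt d * (r / 2)) :=
      mul_le_mul_of_nonneg_left (hdist x hx) Kf.coe_nonneg
    calc |f x| = |f cQ + (f x - f cQ)| := by ring_nf
      _ ≤ |f cQ| + |f x - f cQ| := abs_add_le _ _
      _ ≤ |f cQ| + (Kf : ℝ) * (Real.sqrt d * (r / 2)) := by linarith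
  have bddg : ∀ x ∈ Q, |g x| ≤ |g cQ| + (Kg : ℝ) * (Real.sqrt d * (r / 2)) := by
    intro x hx
    have h1 : |g x - g cQ| ≤ (Kg : ℝ) * ‖x - cQ‖ := by
      have := hg.dist_le_mul x cQ
      rwa [Real.dist_eq, dist_eq_norm] at this
    have h2 : (Kg : ℝ) * ‖x - cQ‖ ≤ (Kg : ℝ) * (Real.sqrt d * (r / 2)) :=
      mul_le_mul_of_nonneg_left (hdist x hx) Kg.coe_nonneg
    calc |g x| = |g cQ + (g x - g cQ)| := by ring_nf
      _ ≤ |g cQ| + |g x - g cQ| := abs_add_le _ _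
      _ ≤ |g cQ| + (Kg : ℝ) * (Real.sqrt d * (r / 2)) := by linarith
  have intfπ : IntegrableOn (fun x => f x * (fderiv ℝ π x).det) Q volume := by
    refine Measure.integrableOn_of_bounded hQfin.ne
      ((hf.continuous.measurable.mul measJπ).aestronglyMeasurable)
      (M := (|f cQ| + (Kf : ℝ) * (Real.sqrt d * (r / 2))) * (L : ℝ) ^ d) ?_
    filter_upwards [ae_restrict_mem hQm] with x hx
    rw [Real.norm_eq_abs, abs_mul]
    have h0 : (0:ℝ) ≤ |f cQ| + (Kf : ℝ) * (Real.sqrt d * (r / 2)) :=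
      le_trans (abs_nonneg _) (bddf x hx)
    exact mul_le_mul (bddf x hx) (hJπ x) (abs_nonneg _) h0
  have intgκ : IntegrableOn (fun x => g x * (fderiv ℝ κ x).det) Q volume := by
    refine Measure.integrableOn_of_bounded hQfin.ne
      ((hg.continuous.measurable.mul measJκ).aestronglyMeasurable)
      (M := (|g cQ| + (Kg : ℝ) * (Real.sqrt d * (r / 2))) * (L : ℝ) ^ d) ?_
    filter_upwards [ae_restrict_mem hQm] with x hx
    rw [Real.norm_eq_abs, abs_mul]
    have h0 : (0:ℝ) ≤ |g cQ| + (Kg : ℝ) * (Real.sqrt d * (r / 2)) :=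
      le_trans (abs_nonneg _) (bddg x hx)
    exact mul_le_mul (bddg x hx) (hJκ x) (abs_nonneg _) h0
  -- decomposition
  set Iπ := ∫ x in Q, (fderiv ℝ π x).det with hIπ
  set Iκ := ∫ x in Q, (fderiv ℝ κ x).det with hIκ
  set Jf := ∫ x in Q, f x * (fderiv ℝ π x).det with hJf
  set Jg := ∫ x in Q, g x * (fderiv ℝ κ x).det with hJg
  have e1 : ∫ x in Q, (f x - f cQ) * (fderiv ℝ π x).det = Jf - f cQ * Iπ := by
    have : (fun x => (f x - f cQ) * (fderiv ℝ π x).det)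
        = fun x => f x * (fderiv ℝ π x).det - f cQ * (fderiv ℝ π x).det :=
      funext fun x => sub_mul _ _ _
    rw [this, integral_sub intfπ (intJπ.const_mul _), integral_const_mul]
  have e2 : ∫ x in Q, (g x - g cQ) * (fderiv ℝ κ x).det = Jg - g cQ * Iκ := by
    have : (fun x => (g x - g cQ) * (fderiv ℝ κ x).det)
        = fun x => g x * (fderiv ℝ κ x).det - g cQ * (fderiv ℝ κ x).det :=
      funext fun x => sub_mul _ _ _
    rw [this, integral_sub intgκ (intJκ.const_mul _), integral_const_mul]
  have edec : Jf - Jg = (∫ x in Q, (f x - f cQ) * (fderiv ℝ π x).det)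
      - (∫ x in Q, (g x - g cQ) * (fderiv ℝ κ x).det)
      + (f cQ - g cQ) * Iκ + f cQ * (Iπ - Iκ) := by
    rw [e1, e2]; ring
  -- bounds
  have B1 : |∫ x in Q, (f x - f cQ) * (fderiv ℝ π x).det|
      ≤ (Kf : ℝ) * (Real.sqrt d * (r / 2)) * (L : ℝ) ^ d * r ^ d := by
    have hb : ∀ᵐ x ∂volume, x ∈ Q →
        ‖(f x - f cQ) * (fderiv ℝ π x).det‖ ≤ (Kf : ℝ) * (Real.sqrt d * (r / 2)) * (L : ℝ) ^ d := by
      refine ae_of_all _ fun x hx => ?_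
      rw [Real.norm_eq_abs, abs_mul]
      have h1 : |f x - f cQ| ≤ (Kf : ℝ) * (Real.sqrt d * (r / 2)) := by
        have := hf.dist_le_mul x cQ
        rw [Real.dist_eq, dist_eq_norm] at this
        exact this.trans (mul_le_mul_of_nonneg_left (hdist x hx) Kf.coe_nonneg)
      have h0 : (0:ℝ) ≤ (Kf : ℝ) * (Real.sqrt d * (r / 2)) :=
        le_trans (abs_nonneg _) h1
      exact mul_le_mul h1 (hJπ x) (abs_nonneg _) h0
    have := norm_setIntegral_le_of_norm_le_const_ae' hQfin hb
    rw [Real.norm_eq_abs, measureReal_def, hQtoReal] at this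
    exact this
  have B2 : |∫ x in Q, (g x - g cQ) * (fderiv ℝ κ x).det|
      ≤ (Kg : ℝ) * (Real.sqrt d * (r / 2)) * (L : ℝ) ^ d * r ^ d := by
    have hb : ∀ᵐ x ∂volume, x ∈ Q →
        ‖(g x - g cQ) * (fderiv ℝ κ x).det‖ ≤ (Kg : ℝ) * (Real.sqrt d * (r / 2)) * (L : ℝ) ^ d := by
      refine ae_of_all _ fun x hx => ?_
      rw [Real.norm_eq_abs, abs_mul]
      have h1 : |g x - g cQ| ≤ (Kg : ℝ) * (Real.sqrt d * (r / 2)) := by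
        have := hg.dist_le_mul x cQ
        rw [Real.dist_eq, dist_eq_norm] at this
        exact this.trans (mul_le_mul_of_nonneg_left (hdist x hx) Kg.coe_nonneg)
      have h0 : (0:ℝ) ≤ (Kg : ℝ) * (Real.sqrt d * (r / 2)) :=
        le_trans (abs_nonneg _) h1
      exact mul_le_mul h1 (hJκ x) (abs_nonneg _) h0
    have := norm_setIntegral_le_of_norm_le_const_ae' hQfin hb
    rw [Real.norm_eq_abs, measureReal_def, hQtoReal] at this
    exact this
  have B3 : |Iκ| ≤ (L : ℝ) ^ d * r ^ d := by
    have hb : ∀ᵐ x ∂volume, x ∈ Q → ‖(fderiv ℝ κ x).det‖ ≤ (L : ℝ) ^ d :=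
      ae_of_all _ fun x _ => by rw [Real.norm_eq_abs]; exact hJκ x
    have := norm_setIntegral_le_of_norm_le_const_ae' hQfin hb
    rw [Real.norm_eq_abs, measureReal_def, hQtoReal] at this
    exact this
  have B4 : |Iπ - Iκ| ≤ cd * (L : ℝ) ^ (d - 1) * r ^ (d - 1) * S := hcd π κ L hπ hκ
  -- assembly
  have habs : |Jf - Jg| ≤ |∫ x in Q, (f x - f cQ) * (fderiv ℝ π x).det|
      + |∫ x in Q, (g x - g cQ) * (fderiv ℝ κ x).det|
      + |f cQ - g cQ| * |Iκ| + |f cQ| * |Iπ - Iκ| := by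
    rw [edec]
    calc |(∫ x in Q, (f x - f cQ) * (fderiv ℝ π x).det)
        - (∫ x in Q, (g x - g cQ) * (fderiv ℝ κ x).det)
        + (f cQ - g cQ) * Iκ + f cQ * (Iπ - Iκ)|
        ≤ |(∫ x in Q, (f x - f cQ) * (fderiv ℝ π x).det)
          - (∫ x in Q, (g x - g cQ) * (fderiv ℝ κ x).det)
          + (f cQ - g cQ) * Iκ| + |f cQ * (Iπ - Iκ)| := abs_add_le _ _
      _ ≤ |(∫ x in Q, (f x - f cQ) * (fderiv ℝ π x).det)
          - (∫ x in Q, (g x - g cQ) * (fderiv ℝ κ x).det)|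
          + |(f cQ - g cQ) * Iκ| + |f cQ * (Iπ - Iκ)| := by
          gcongr
          exact abs_add_le _ _
      _ ≤ |∫ x in Q, (f x - f cQ) * (fderiv ℝ π x).det|
          + |∫ x in Q, (g x - g cQ) * (fderiv ℝ κ x).det|
          + |(f cQ - g cQ) * Iκ| + |f cQ * (Iπ - Iκ)| := by
          gcongr
          exact abs_sub _ _
      _ = |∫ x in Q, (f x - f cQ) * (fderiv ℝ π x).det|
          + |∫ x in Q, (g x - g cQ) * (fderiv ℝ κ x).det|
          + |f cQ - g cQ| * |Iκ| + |f cQ| * |Iπ - Iκ| := by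
          rw [abs_mul, abs_mul]
  have final : |Jf - Jg|
      ≤ (Kf : ℝ) * (Real.sqrt d * (r / 2)) * (L : ℝ) ^ d * r ^ d
        + (Kg : ℝ) * (Real.sqrt d * (r / 2)) * (L : ℝ) ^ d * r ^ d
        + |f cQ - g cQ| * ((L : ℝ) ^ d * r ^ d)
        + |f cQ| * (cd * (L : ℝ) ^ (d - 1) * r ^ (d - 1) * S) := by
    refine habs.trans ?_
    have t3 : |f cQ - g cQ| * |Iκ| ≤ |f cQ - g cQ| * ((L : ℝ) ^ d * r ^ d) :=
      mul_le_mul_of_nonneg_left B3 (abs_nonneg _)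
    have t4 : |f cQ| * |Iπ - Iκ|
        ≤ |f cQ| * (cd * (L : ℝ) ^ (d - 1) * r ^ (d - 1) * S) :=
      mul_le_mul_of_nonneg_left B4 (abs_nonneg _)
    exact add_le_add (add_le_add (add_le_add B1 B2) t3) t4
  refine final.trans (le_of_eq ?_)
  rw [pow_succ]
  ring
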